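/- Fix p, q ∈ ℂ and set g₁(a,b,d,e) = a² − 2qab + q²b² − 2bd and g₂(a,b,d,e) = −2ae + d² − 2pde + p²e². Then every nonzero point (a,b,d,e) ∈ ℂ⁴ with g₁ = g₂ = 0 has the property that the gradient vectors ∇g₁ and ∇g₂ at that point are linearly independent over ℂ, if and only if pq ≠ 0 and pq ≠ 1/4. -/

import Mathlib

theorem smooth_away_from_origin_iff (p q : ℂ) :
    (∀ a b d e : ℂ, ¬(a = 0 ∧ b = 0 ∧ d = 0 ∧ e = 0) →
      a^2 - 2*q*a*b + q^2*b^2 - 2*b*d = 0 →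
      -2*a*e + d^2 - 2*p*d*e + p^2*e^2 = 0 →
      LinearIndependent ℂ
        ![![2*a - 2*q*b, -2*q*a + 2*q^2*b - 2*d, -2*b, 0],
          ![-2*e, 0, 2*d - 2*p*e, -2*a - 2*p*d + 2*p^2*e]])
    ↔ (p * q ≠ 0 ∧ p * q ≠ 1/4) := by
  constructor
  · intro h
    constructor
    · intro hpq
      rcases mul_eq_zero.1 hpq with hp | hq
      · have hli := h 0 0 0 1 (by simp) (by ring) (by rw [hp]; ring)
        apply hli.ne_zero 0
        funext i; fin_cases i <;> simp
      · have hli := h 0 1 0 0 (by simp) (by rw [hq]; ring) (by ring)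
        apply hli.ne_zero 1
        funext i; fin_cases i <;> simp
    · intro hpq
      have hq : q ≠ 0 := by
        rintro rfl
        rw [mul_zero] at hpq
        norm_num at hpq
      have hli := h (1/2) (-1/(2*q)) (-q) (4*q^2)
        (by rintro ⟨h1, -⟩; norm_num at h1)
        (by field_simp; ring)
        (by linear_combination (16*p*q^3 + 12*q^2) * hpq)
      rw [LinearIndependent.pair_iff] at hli
      have hzz := hli (4*q^2) 1 ?_
      · exact one_ne_zero hzz.2
      · funext i
        fin_cases i
        · show (4*q^2 : ℂ) * _ + (1:ℂ) * _ = 0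
          simp only [Fin.zero_eta, Fin.mk_one, Fin.reduceFinMk, Matrix.cons_val]
          field_simp
          ring
        · show (4*q^2 : ℂ) * _ + (1:ℂ) * _ = 0
          simp only [Fin.zero_eta, Fin.mk_one, Fin.reduceFinMk, Matrix.cons_val]
          field_simp
          ring
        · show (4*q^2 : ℂ) * _ + (1:ℂ) * _ = 0
          simp only [Fin.zero_eta, Fin.mk_one, Fin.reduceFinMk, Matrix.cons_val]
          field_simp
          linear_combination (-8*q)*hpq
        · show (4*q^2 : ℂ) * _ + (1:ℂ) * _ = 0
          simp only [Fin.zero_eta, Fin.mk_one, Fin.reduceFinMk, Matrix.cons_val]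
          field_simp
          linear_combination (8*p*q+4)*hpq
  · rintro ⟨h0, h14⟩ a b d e hne hg1 hg2
    have hp : p ≠ 0 := fun h => h0 (by rw [h]; ring)
    have hq : q ≠ 0 := fun h => h0 (by rw [h]; ring)
    rw [LinearIndependent.pair_iff]
    intro s t hst
    have E0 := congrFun hst 0
    have E1 := congrFun hst 1
    have E2 := congrFun hst 2
    have E3 := congrFun hst 3
    simp [Pi.add_apply, Pi.smul_apply] at E0 E1 E2 E3
    have hsz : s = 0 := by
      by_contra hs
      have hd : -2*q*a + 2*q^2*b - 2*d = 0 := by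
        rcases E1 with h' | h'
        · exact absurd h' hs
        · linear_combination h'
      by_cases ht : t = 0
      · have hb0 : b = 0 := by
          have hsb : s * b = 0 := by
            linear_combination (-1/2) * E2 + (d - p*e) * ht
          rcases mul_eq_zero.1 hsb with h' | h'
          · exact absurd h' hs
          · exact h'
        have ha0 : a = 0 := by
          have hsa : s * (a - q*b) = 0 := by linear_combination (1/2) * E0 + e * ht
          rcases mul_eq_zero.1 hsa with h' | h'
          · exact absurd h' hs
          · linear_combination h' + q * hb0
        have hd0 : d = 0 := by linear_combination (-1/2)*hd - q*ha0 + q^2*hb0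
        have he0 : e = 0 := by
          have hpe : (p*e)^2 = 0 := by
            linear_combination hg2 + 2*e*ha0 + (-d + 2*p*e)*hd0
          have := pow_eq_zero_iff (n := 2) (by norm_num) |>.1 hpe
          rcases mul_eq_zero.1 this with h' | h'
          · exact absurd h' hp
          · exact h'
        exact hne ⟨ha0, hb0, hd0, he0⟩
      · have he3 : -2*a - 2*p*d + 2*p^2*e = 0 := by
          rcases E3 with h' | h'
          · exact absurd h' ht
          · linear_combination h'
        have hfac : (a - q*b) * (a + q*b) = 0 := by
          linear_combination hg1 - b * hd
        by_cases hu : a - q*b = 0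
        · have hd0 : d = 0 := by linear_combination (-1/2)*hd - q*hu
          have he0 : e = 0 := by
            have hte : t * e = 0 := by linear_combination (-1/2)*E0 + s*hu
            rcases mul_eq_zero.1 hte with h' | h'
            · exact absurd h' ht
            · exact h'
          have ha0 : a = 0 := by linear_combination (-1/2)*he3 - p*hd0 + p^2*he0
          have hb0 : b = 0 := by
            have hqb : q * b = 0 := by linear_combination -hu + ha0
            rcases mul_eq_zero.1 hqb with h' | h'
            · exact absurd h' hq
            · exact h'
          exact hne ⟨ha0, hb0, hd0, he0⟩
        · have hb : a + q*b = 0 := by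
            rcases mul_eq_zero.1 hfac with h' | h'
            · exact absurd h' hu
            · exact h'
          have hd2 : d + 2*q*a = 0 := by linear_combination (-1/2)*hd + q*hb
          have he : p^2*e - a + 2*p*q*a = 0 := by linear_combination (1/2)*he3 + p*hd2
          have ha : a ≠ 0 := by
            intro h'
            apply hu
            have hqb : q * b = 0 := by linear_combination hb - h'
            linear_combination h' - hqb
          have key : a^2*(4*p*q - 1) = 0 := by
            linear_combination p^2*hg2 + (-p^2*d + 2*p^2*q*a + 2*p^3*e) * hd2
              + (-p^2*e + a - 2*p*q*a) * he
          rcases mul_eq_zero.1 key with h' | h'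
          · exact ha (pow_eq_zero_iff (n := 2) (by norm_num) |>.1 h')
          · exact h14 (by linear_combination (1/4) * h')
    refine ⟨hsz, ?_⟩
    by_contra ht
    subst hsz
    have he0 : e = 0 := by
      have hte : t * e = 0 := by linear_combination (-1/2)*E0
      rcases mul_eq_zero.1 hte with h' | h'
      · exact absurd h' ht
      · exact h'
    have hd0 : d = 0 := by
      have htd : t * (d - p*e) = 0 := by linear_combination (1/2)*E2
      rcases mul_eq_zero.1 htd with h' | h'
      · exact absurd h' ht
      · linear_combination h' + p*he0
    have ha0 : a = 0 := by
      rcases E3 with h' | h'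
      · exact absurd h' ht
      · linear_combination (-1/2)*h' - p*hd0 + p^2*he0
    have hb0 : b = 0 := by
      have hqb2 : (q*b)^2 = 0 := by
        linear_combination hg1 + (-a + 2*q*b)*ha0 + 2*b*hd0
      have := pow_eq_zero_iff (n := 2) (by norm_num) |>.1 hqb2
      rcases mul_eq_zero.1 this with h' | h'
      · exact absurd h' hq
      · exact h'
    exact hne ⟨ha0, hb0, hd0, he0⟩
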